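/- For every real τ with 0 ≤ τ < 1, the Lebesgue integral ∫_ℝ (k²/(k⁴ + 1))·|k|^{−τ} dk is finite and equals (π/2)·csc(πτ/4 + π/4). -/

import Mathlib

set_option maxHeartbeats 1000000

noncomputable section
open Real MeasureTheory Set


lemma exp_int_val {c : ℝ} (hc : 0 < c) :
    ∫ t in Ioi (0:ℝ), Real.exp (-(c * t)) = 1 / c := by
  have := Real.integral_rpow_mul_exp_neg_mul_Ioi (a := 1) (r := c) one_pos hc
  simpa [Real.Gamma_one] using this

lemma g_integrable {a : ℝ} (h1 : 0 < a) (h2 : a < 1) :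
    IntegrableOn (fun x : ℝ => x ^ (a-1) / (1+x)) (Ioi 0) := by
  have hmeas : Measurable (fun x : ℝ => x ^ (a-1) / (1+x)) := by
    have : Measurable fun x : ℝ => x ^ (a-1) := by measurability
    exact this.div (measurable_const.add measurable_id)
  have I1 : IntegrableOn (fun x : ℝ => x ^ (a-1) / (1+x)) (Ioo 0 1) := by
    refine Integrable.mono' (g := fun x => x ^ (a-1))
      ((intervalIntegral.integrableOn_Ioo_rpow_iff one_pos).2 (by linarith)) hmeas.aestronglyMeasurable ?_
    refine (ae_restrict_iff' measurableSet_Ioo).2 (ae_of_all _ fun x hx => ?_)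
    have hx0 : (0:ℝ) < x := hx.1
    rw [Real.norm_eq_abs, abs_of_nonneg (by positivity)]
    rw [div_le_iff₀ (by positivity)]
    nlinarith [Real.rpow_pos_of_pos hx0 (a-1)]
  have I2 : IntegrableOn (fun x : ℝ => x ^ (a-1) / (1+x)) (Ici 1) := by
    rw [integrableOn_Ici_iff_integrableOn_Ioi]
    refine Integrable.mono' (g := fun x => x ^ (a-2))
      (integrableOn_Ioi_rpow_of_lt (by linarith) one_pos) hmeas.aestronglyMeasurable ?_
    refine (ae_restrict_iff' measurableSet_Ioi).2 (ae_of_all _ fun x hx => ?_)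
    have hx1 : (1:ℝ) < x := hx
    have hx0 : (0:ℝ) < x := by linarith
    rw [Real.norm_eq_abs, abs_of_nonneg (by positivity)]
    have : x ^ (a-2) = x ^ (a-1) / x := by
      rw [← Real.rpow_sub_one hx0.ne']; ring_nf
    show x ^ (a - 1) / (1 + x) ≤ x ^ (a-2)
    rw [this]
    apply div_le_div_of_nonneg_left (by positivity) (by positivity) (by linarith)
  have : Ioi (0:ℝ) ⊆ Ioo 0 1 ∪ Ici 1 := by
    intro x hx
    rcases lt_or_ge x 1 with h | h
    · exact Or.inl ⟨hx, h⟩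
    · exact Or.inr h
  exact (I1.union I2).mono_set this
lemma g_integral {a : ℝ} (h1 : 0 < a) (h2 : a < 1) :
    ∫ x in Ioi (0:ℝ), x ^ (a-1) / (1+x) = Real.Gamma a * Real.Gamma (1-a) := by
  have hFmeas : Measurable (Function.uncurry
      (fun x t : ℝ => x ^ (a-1) * Real.exp (-((1+x)*t)))) := by
    have hm : Measurable fun p : ℝ × ℝ => p.1 ^ (a-1) := by measurability
    exact hm.mul (((measurable_const.add measurable_fst).mul measurable_snd).neg.exp)
  have hF : Integrable (Function.uncurry
      (fun x t : ℝ => x ^ (a-1) * Real.exp (-((1+x)*t))))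
      ((volume.restrict (Ioi (0:ℝ))).prod (volume.restrict (Ioi (0:ℝ)))) := by
    rw [integrable_prod_iff hFmeas.aestronglyMeasurable]
    simp only [Function.uncurry_apply_pair]
    constructor
    · filter_upwards [ae_restrict_mem measurableSet_Ioi] with x hx
      have hc : (0:ℝ) < 1 + x := by have : (0:ℝ) < x := hx; linarith
      have h : IntegrableOn (fun t : ℝ => Real.exp (-((1+x)*t))) (Ioi 0) := by
        simpa only [neg_mul] using exp_neg_integrableOn_Ioi (b := 1+x) 0 hc
      exact h.const_mul _
    · refine ((g_integrable h1 h2).congr ?_)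
      filter_upwards [ae_restrict_mem measurableSet_Ioi] with x hx
      have hx0 : (0:ℝ) < x := hx
      have hc : (0:ℝ) < 1 + x := by linarith
      calc x ^ (a-1) / (1+x) = x ^ (a-1) * (1/(1+x)) := by ring
      _ = x ^ (a-1) * ∫ t in Ioi (0:ℝ), Real.exp (-((1+x)*t)) := by rw [exp_int_val hc]
      _ = ∫ t in Ioi (0:ℝ), x ^ (a-1) * Real.exp (-((1+x)*t)) := by
          rw [integral_const_mul _ _]
      _ = ∫ t in Ioi (0:ℝ), ‖x ^ (a-1) * Real.exp (-((1+x)*t))‖ := by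
          refine setIntegral_congr_fun measurableSet_Ioi fun t ht => ?_
          rw [Real.norm_eq_abs, abs_of_nonneg (by positivity)]
  have swap := integral_integral_swap hF
  have hL : (∫ x in Ioi (0:ℝ), ∫ t in Ioi (0:ℝ),
        x ^ (a-1) * Real.exp (-((1+x)*t))) = ∫ x in Ioi (0:ℝ), x ^ (a-1) / (1+x) := by
    refine setIntegral_congr_fun measurableSet_Ioi fun x hx => ?_
    have hx0 : (0:ℝ) < x := hx
    have hc : (0:ℝ) < 1 + x := by linarith
    rw [integral_const_mul _ _, exp_int_val hc]
    ring
  have hR : (∫ t in Ioi (0:ℝ), ∫ x in Ioi (0:ℝ),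
        x ^ (a-1) * Real.exp (-((1+x)*t))) = Real.Gamma a * Real.Gamma (1-a) := by
    have step1 : (∫ t in Ioi (0:ℝ), ∫ x in Ioi (0:ℝ),
          x ^ (a-1) * Real.exp (-((1+x)*t)))
        = ∫ t in Ioi (0:ℝ), Real.Gamma a * (t ^ ((1-a)-1) * Real.exp (-(1*t))) := by
      refine setIntegral_congr_fun measurableSet_Ioi fun t ht => ?_
      have ht0 : (0:ℝ) < t := ht
      have inner : (∫ x in Ioi (0:ℝ), x ^ (a-1) * Real.exp (-((1+x)*t)))
          = Real.exp (-t) * ((1/t) ^ a * Real.Gamma a) := by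
        rw [← Real.integral_rpow_mul_exp_neg_mul_Ioi h1 ht0, ← integral_const_mul _ _]
        refine setIntegral_congr_fun measurableSet_Ioi fun x hx => ?_
        rw [show Real.exp (-((1+x)*t)) = Real.exp (-(t*x)) * Real.exp (-t) by
          rw [← Real.exp_add]; ring_nf]
        ring
      rw [inner, one_div, Real.inv_rpow ht0.le,
        show (1-a)-1 = -a by ring, Real.rpow_neg ht0.le]
      simp only [one_mul]
      ring
    rw [step1, integral_const_mul _ _,
      Real.integral_rpow_mul_exp_neg_mul_Ioi (by linarith : (0:ℝ) < 1-a) one_pos]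
    rw [one_div_one, Real.one_rpow]
    ring
  rw [← hL, swap, hR]
lemma integrable_comp_abs' {f : ℝ → ℝ} (hf : IntegrableOn f (Ioi 0)) :
    Integrable fun x : ℝ => f |x| := by
  have h1 : IntegrableOn (fun x : ℝ => f |x|) (Ioi 0) :=
    hf.congr_fun (fun x hx => by rw [abs_of_pos hx]) measurableSet_Ioi
  have int_Iic : IntegrableOn (fun x ↦ f |x|) (Iic 0) := by
    rw [← Measure.map_neg_eq_self (volume : Measure ℝ)]
    have m : MeasurableEmbedding fun x : ℝ => -x := (Homeomorph.neg ℝ).measurableEmbedding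
    rw [m.integrableOn_map_iff]
    simp_rw [Function.comp_def, abs_neg, neg_preimage, neg_Iic, neg_zero]
    rw [integrableOn_Ici_iff_integrableOn_Ioi]; exact h1
  have := int_Iic.union h1
  rwa [Iic_union_Ioi, integrableOn_univ] at this

lemma f_integrable {τ : ℝ} (hτ1 : 0 ≤ τ) (hτ2 : τ < 1) :
    IntegrableOn (fun x : ℝ => x ^ 2 / (x ^ 4 + 1) * x ^ (-τ)) (Ioi 0) := by
  have hmeas : Measurable (fun x : ℝ => x ^ 2 / (x ^ 4 + 1) * x ^ (-τ)) := by
    have h : Measurable fun x : ℝ => x ^ (-τ) := by measurability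
    exact ((measurable_id.pow_const 2).div ((measurable_id.pow_const 4).add
      measurable_const)).mul h
  have I1 : IntegrableOn (fun x : ℝ => x ^ 2 / (x ^ 4 + 1) * x ^ (-τ)) (Ioo 0 1) := by
    refine Integrable.mono' (g := fun x => x ^ (-τ))
      ((intervalIntegral.integrableOn_Ioo_rpow_iff one_pos).2 (by linarith))
      hmeas.aestronglyMeasurable ?_
    refine (ae_restrict_iff' measurableSet_Ioo).2 (ae_of_all _ fun x hx => ?_)
    have hx0 : (0:ℝ) < x := hx.1
    have hx1 : x < 1 := hx.2
    rw [Real.norm_eq_abs, abs_of_nonneg (by positivity)]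
    have hb : x ^ 2 / (x ^ 4 + 1) ≤ 1 := by
      rw [div_le_one (by positivity)]; nlinarith
    calc x ^ 2 / (x ^ 4 + 1) * x ^ (-τ) ≤ 1 * x ^ (-τ) :=
          mul_le_mul_of_nonneg_right hb (by positivity)
      _ = x ^ (-τ) := one_mul _
  have I2 : IntegrableOn (fun x : ℝ => x ^ 2 / (x ^ 4 + 1) * x ^ (-τ)) (Ici 1) := by
    rw [integrableOn_Ici_iff_integrableOn_Ioi]
    refine Integrable.mono' (g := fun x => x ^ ((-2):ℝ))
      (integrableOn_Ioi_rpow_of_lt (by norm_num) one_pos)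
      hmeas.aestronglyMeasurable ?_
    refine (ae_restrict_iff' measurableSet_Ioi).2 (ae_of_all _ fun x hx => ?_)
    have hx1 : (1:ℝ) < x := hx
    have hx0 : (0:ℝ) < x := by linarith
    rw [Real.norm_eq_abs, abs_of_nonneg (by positivity)]
    have h2 : x ^ ((-2):ℝ) = (x ^ 2)⁻¹ := by
      rw [show ((-2):ℝ) = -((2:ℕ):ℝ) by norm_num, Real.rpow_neg hx0.le, Real.rpow_natCast]
    have hA : x ^ 2 / (x ^ 4 + 1) ≤ (x ^ 2)⁻¹ := by
      rw [div_le_iff₀ (by positivity), inv_mul_eq_div, le_div_iff₀ (by positivity)]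
      nlinarith
    have hB : x ^ (-τ) ≤ 1 := Real.rpow_le_one_of_one_le_of_nonpos hx1.le (by linarith)
    calc x ^ 2 / (x ^ 4 + 1) * x ^ (-τ) ≤ (x ^ 2)⁻¹ * 1 :=
          mul_le_mul hA hB (by positivity) (by positivity)
      _ = x ^ ((-2):ℝ) := by rw [mul_one, h2]
  have hsub : Ioi (0:ℝ) ⊆ Ioo 0 1 ∪ Ici 1 := by
    intro x hx
    rcases lt_or_ge x 1 with h | h
    · exact Or.inl ⟨hx, h⟩
    · exact Or.inr h
  exact (I1.union I2).mono_set hsub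

lemma f_integral {τ : ℝ} (hτ1 : 0 ≤ τ) (hτ2 : τ < 1) :
    ∫ x in Ioi (0:ℝ), x ^ 2 / (x ^ 4 + 1) * x ^ (-τ)
      = Real.Gamma ((3-τ)/4) * Real.Gamma (1-(3-τ)/4) / 4 := by
  set a : ℝ := (3-τ)/4 with ha
  have h1 : 0 < a := by rw [ha]; linarith
  have h2 : a < 1 := by rw [ha]; linarith
  have key := MeasureTheory.integral_comp_rpow_Ioi_of_pos
    (g := fun y : ℝ => y ^ (a-1) / (1+y)) (p := 4) (by norm_num)
  have eq1 : ∫ x in Ioi (0:ℝ), (4 * x ^ ((4:ℝ)-1)) • ((x ^ (4:ℝ)) ^ (a-1) / (1 + x ^ (4:ℝ)))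
      = ∫ x in Ioi (0:ℝ), 4 * (x ^ 2 / (x ^ 4 + 1) * x ^ (-τ)) := by
    refine setIntegral_congr_fun measurableSet_Ioi fun x hx => ?_
    have hx0 : (0:ℝ) < x := hx
    have e4 : x ^ (4:ℝ) = x ^ (4:ℕ) := by
      rw [show (4:ℝ) = ((4:ℕ):ℝ) by norm_num, Real.rpow_natCast]
    have e1 : (x ^ (4:ℝ)) ^ (a-1) = x ^ (-1-τ) := by
      rw [← Real.rpow_mul hx0.le]
      congr 1
      rw [ha]; ring
    have e3 : x ^ ((4:ℝ)-1) * x ^ (-1-τ) = x ^ 2 * x ^ (-τ) := by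
      rw [← Real.rpow_add hx0, ← Real.rpow_natCast x 2, ← Real.rpow_add hx0]
      congr 1
      push_cast
      ring
    rw [smul_eq_mul, e1, e4]
    calc (4 * x ^ ((4:ℝ)-1)) * (x ^ (-1-τ) / (1 + x ^ 4))
        = 4 * (x ^ ((4:ℝ)-1) * x ^ (-1-τ)) / (1 + x ^ 4) := by ring
      _ = 4 * (x ^ 2 * x ^ (-τ)) / (1 + x ^ 4) := by rw [e3]
      _ = 4 * (x ^ 2 / (x ^ 4 + 1) * x ^ (-τ)) := by ring
  have h4 : 4 * ∫ x in Ioi (0:ℝ), x ^ 2 / (x ^ 4 + 1) * x ^ (-τ)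
      = Real.Gamma a * Real.Gamma (1-a) := by
    rw [← MeasureTheory.integral_const_mul, ← eq1, key, g_integral h1 h2]
  linarith

theorem stmt14 (τ : ℝ) (hτ1 : 0 ≤ τ) (hτ2 : τ < 1) :
    Integrable (fun k : ℝ => k ^ 2 / (k ^ 4 + 1) * |k| ^ (-τ)) ∧
    (∫ k : ℝ, k ^ 2 / (k ^ 4 + 1) * |k| ^ (-τ)) =
      (π / 2) * (1 / Real.sin (π * τ / 4 + π / 4)) := by
  have hfun : (fun k : ℝ => k ^ 2 / (k ^ 4 + 1) * |k| ^ (-τ))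
      = fun k : ℝ => |k| ^ 2 / (|k| ^ 4 + 1) * |k| ^ (-τ) := by
    funext k
    have h4 : |k| ^ 4 = k ^ 4 := by
      rw [← abs_pow]; exact abs_of_nonneg (by positivity)
    rw [sq_abs, h4]
  constructor
  · rw [hfun]
    exact integrable_comp_abs' (f_integrable hτ1 hτ2)
  · have hval : (∫ k : ℝ, k ^ 2 / (k ^ 4 + 1) * |k| ^ (-τ))
        = 2 * ∫ x in Ioi (0:ℝ), x ^ 2 / (x ^ 4 + 1) * x ^ (-τ) := by
      rw [hfun]
      exact integral_comp_abs (f := fun x : ℝ => x ^ 2 / (x ^ 4 + 1) * x ^ (-τ))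
    rw [hval, f_integral hτ1 hτ2, Real.Gamma_mul_Gamma_one_sub]
    have hs : Real.sin (π * ((3-τ)/4)) = Real.sin (π * τ / 4 + π / 4) := by
      rw [show π * ((3-τ)/4) = π - (π * τ / 4 + π / 4) by ring, Real.sin_pi_sub]
    rw [hs]
    ring
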